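/- Let λ±(c, α, δ₀) = 1 + α·(-1 + 8δ₀ - 10δ₀² - (2δ₀² - 4δ₀ + 1)c ± √((c+1)(1-δ₀)(c-f₋)(c-f₊)))/((2δ₀-1)(4δ₀ - c - 1)) with f± as in the point block-Jacobi analysis. Then the choice α = (2δ₀-1)²/(6δ₀²-6δ₀+1) satisfies λ₊(1, α, δ₀) = -λ₋(1, α, δ₀) for all δ₀ > 1. -/

import Mathlib

noncomputable def fPlusP (δ₀ : ℝ) : ℝ :=
  (1 - 6 * δ₀ + 8 * δ₀ ^ 2 - 8 * δ₀ ^ 3 + 4 * δ₀ ^ 4 +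
    Real.sqrt (1 - 8 * δ₀ + 16 * δ₀ ^ 2 - 48 * δ₀ ^ 3 + 120 * δ₀ ^ 4
      - 160 * δ₀ ^ 5 + 128 * δ₀ ^ 6 - 64 * δ₀ ^ 7 + 16 * δ₀ ^ 8)) /
  (2 * (δ₀ - 1))

noncomputable def fMinusP (δ₀ : ℝ) : ℝ :=
  (1 - 6 * δ₀ + 8 * δ₀ ^ 2 - 8 * δ₀ ^ 3 + 4 * δ₀ ^ 4 -
    Real.sqrt (1 - 8 * δ₀ + 16 * δ₀ ^ 2 - 48 * δ₀ ^ 3 + 120 * δ₀ ^ 4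
      - 160 * δ₀ ^ 5 + 128 * δ₀ ^ 6 - 64 * δ₀ ^ 7 + 16 * δ₀ ^ 8)) /
  (2 * (δ₀ - 1))

/-- Eigenvalue `λ₊` of the point block-Jacobi two-level iteration operator. -/
noncomputable def lambdaPlusP (c α δ₀ : ℝ) : ℝ :=
  1 + α * (-1 + 8 * δ₀ - 10 * δ₀ ^ 2 - (2 * δ₀ ^ 2 - 4 * δ₀ + 1) * c +
    Real.sqrt ((c + 1) * (1 - δ₀) * (c - fMinusP δ₀) * (c - fPlusP δ₀))) /
    ((2 * δ₀ - 1) * (4 * δ₀ - c - 1))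

/-- Eigenvalue `λ₋`. -/
noncomputable def lambdaMinusP (c α δ₀ : ℝ) : ℝ :=
  1 + α * (-1 + 8 * δ₀ - 10 * δ₀ ^ 2 - (2 * δ₀ ^ 2 - 4 * δ₀ + 1) * c -
    Real.sqrt ((c + 1) * (1 - δ₀) * (c - fMinusP δ₀) * (c - fPlusP δ₀))) /
    ((2 * δ₀ - 1) * (4 * δ₀ - c - 1))

theorem stmt_14 (δ₀ : ℝ) (h : 1 < δ₀) :
    lambdaPlusP 1 ((2 * δ₀ - 1) ^ 2 / (6 * δ₀ ^ 2 - 6 * δ₀ + 1)) δ₀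
      = - lambdaMinusP 1 ((2 * δ₀ - 1) ^ 2 / (6 * δ₀ ^ 2 - 6 * δ₀ + 1)) δ₀ := by
  have h1 : (2 * δ₀ - 1) ≠ 0 := by nlinarith
  have h2 : (6 * δ₀ ^ 2 - 6 * δ₀ + 1) ≠ 0 := by nlinarith
  have h3 : (4 * δ₀ - 1 - 1) ≠ 0 := by nlinarith
  unfold lambdaPlusP lambdaMinusP
  have h5 : δ₀ * 6 * (δ₀ - 1) + 1 ≠ 0 := by nlinarith
  have h6 : δ₀ * 4 - 1 - 1 ≠ 0 := by nlinarith
  field_simp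
  ring
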